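/- Fix n ≥ 1, a finite output type 𝒪, and a Markov kernel κ assigning to each s ∈ (Fin n → Bool) a probability mass function κ(s) on 𝒪. Let S be uniform on (Fin n → Bool) and, given S = s, let O be distributed as κ(s). For each i and o, let p⁺_i(o) := 2^{−(n−1)} ∑_{s : s(i) = true} κ(s)(o) and p⁻_i(o) := 2^{−(n−1)} ∑_{s : s(i) = false} κ(s)(o) be the conditional output distributions. Then: (a) for every guesser G : 𝒪 → (Fin n → Bool), the efficacy (1/n) ∑_{i} Pr[G(O)(i) = S(i)] is at most (1/(2n)) ∑_{i} ∑_{o ∈ 𝒪} max(p⁺_i(o), p⁻_i(o)); and (b) the maximum-likelihood guesser G*, defined by G*(o)(i) = true if and only if p⁺_i(o) ≥ p⁻_i(o), attains this bound with equality. -/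
import Mathlib


open Finset

/-- The conditional output distribution `p^b_i(o) = 2^{-(n-1)} ∑_{s : s i = b} κ s o`. -/
noncomputable def pCond {O : Type*} [Fintype O] (n : ℕ) (κ : (Fin n → Bool) → O → ℝ)
    (i : Fin n) (b : Bool) (o : O) : ℝ :=
  (1 / 2 ^ (n - 1)) * ∑ s : Fin n → Bool, if s i = b then κ s o else 0

/-- `Pr[G(O)(i) = S(i)]` where `S` is uniform on `Fin n → Bool` and `O ~ κ S`. -/
noncomputable def prCorrect {O : Type*} [Fintype O] (n : ℕ) (κ : (Fin n → Bool) → O → ℝ)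
    (G : O → Fin n → Bool) (i : Fin n) : ℝ :=
  (1 / 2 ^ n) * ∑ s : Fin n → Bool, ∑ o : O, κ s o * (if G o i = s i then 1 else 0)

/-- The efficacy of a guesser without abstentions. -/
noncomputable def efficacy {O : Type*} [Fintype O] (n : ℕ) (κ : (Fin n → Bool) → O → ℝ)
    (G : O → Fin n → Bool) : ℝ :=
  (1 / n) * ∑ i : Fin n, prCorrect n κ G i

theorem stmt6 (n : ℕ) (hn : 1 ≤ n) (O : Type*) [Fintype O]
    (κ : (Fin n → Bool) → O → ℝ) (hκ0 : ∀ s o, 0 ≤ κ s o) (hκ1 : ∀ s, ∑ o : O, κ s o = 1) :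
    (∀ G : O → Fin n → Bool,
      efficacy n κ G ≤ (1 / (2 * n)) * ∑ i : Fin n, ∑ o : O,
        max (pCond n κ i true o) (pCond n κ i false o)) ∧
    efficacy n κ (fun o i => decide (pCond n κ i false o ≤ pCond n κ i true o)) =
      (1 / (2 * n)) * ∑ i : Fin n, ∑ o : O,
        max (pCond n κ i true o) (pCond n κ i false o) := by
  have hpow : (1 : ℝ) / 2 ^ n = 1 / 2 * (1 / 2 ^ (n - 1)) := by
    have : n - 1 + 1 = n := Nat.succ_pred_eq_of_pos hn
    rw [show (2:ℝ)^n = 2^(n-1)*2 from by rw [← pow_succ, this]]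
    ring
  have key : ∀ (G : O → Fin n → Bool) (i : Fin n),
      prCorrect n κ G i = (1 / 2) * ∑ o : O, pCond n κ i (G o i) o := by
    intro G i
    unfold prCorrect pCond
    rw [Finset.sum_comm, Finset.mul_sum, Finset.mul_sum]
    refine Finset.sum_congr rfl fun o _ => ?_
    have h1 : ∑ s : Fin n → Bool, κ s o * (if G o i = s i then 1 else 0)
        = ∑ s : Fin n → Bool, if s i = G o i then κ s o else 0 := by
      refine Finset.sum_congr rfl fun s _ => ?_
      rcases eq_or_ne (s i) (G o i) with h | h
      · simp [h]
      · rw [if_neg h, if_neg (fun hh => h hh.symm), mul_zero]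
    rw [h1, ← mul_assoc, ← hpow]
  have keyE : ∀ (G : O → Fin n → Bool),
      efficacy n κ G = (1 / n) * ∑ i : Fin n, (1 / 2) * ∑ o : O, pCond n κ i (G o i) o := by
    intro G
    unfold efficacy
    congr 1
    exact Finset.sum_congr rfl fun i _ => key G i
  have hRHS : (1 / (2 * (n : ℝ))) * ∑ i : Fin n, ∑ o : O,
      max (pCond n κ i true o) (pCond n κ i false o)
      = (1 / n) * ∑ i : Fin n, (1 / 2) * ∑ o : O,
        max (pCond n κ i true o) (pCond n κ i false o) := by
    rw [Finset.mul_sum, Finset.mul_sum]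
    refine Finset.sum_congr rfl fun i _ => ?_
    ring
  constructor
  · intro G
    rw [keyE, hRHS]
    have hn0 : (0 : ℝ) ≤ 1 / n := by positivity
    apply mul_le_mul_of_nonneg_left _ hn0
    refine Finset.sum_le_sum fun i _ => ?_
    apply mul_le_mul_of_nonneg_left _ (by norm_num : (0:ℝ) ≤ 1/2)
    refine Finset.sum_le_sum fun o _ => ?_
    cases h : G o i
    · exact le_max_right _ _
    · exact le_max_left _ _
  · rw [keyE, hRHS]
    congr 1
    refine Finset.sum_congr rfl fun i _ => ?_
    congr 1
    refine Finset.sum_congr rfl fun o _ => ?_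
    by_cases h : pCond n κ i false o ≤ pCond n κ i true o
    · simp [h, max_eq_left h]
    · simp [h, max_eq_right (le_of_not_ge h)]
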